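/- Let v : ℤⁿ → [1,∞) be a submultiplicative weight, fix j ∈ {1, …, n}, and set C_j = {y ∈ ℤⁿ : σ(y, e_j) = σ(e_j, y)}, where e_j is the j-th standard basis vector. For f ∈ ℓ¹_v(ℤⁿ) define the averages J_m(f) = (1/m) Σ_{k=1}^m (δ_{e_j}*)^{♮k} ♮ f ♮ (δ_{e_j})^{♮k}, where δ_{e_j}* = conj(σ(e_j, −e_j)) δ_{−e_j} and the powers are k-fold twisted convolution powers. Then J_m(f) converges in the ℓ¹_v-norm, as m → ∞, to the function f · 1_{C_j} (the pointwise product of f with the indicator function of C_j). -/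

import Mathlib

open scoped BigOperators
open Filter Topology
noncomputable section

def coc {n : ℕ} (θ : Fin n → Fin n → ℂ) (l m : Fin n → ℤ) : ℂ :=
  ∏ p ∈ Finset.univ.filter (fun p : Fin n × Fin n => p.1 < p.2), θ p.2 p.1 ^ (l p.2 * m p.1)

def tconv {n : ℕ} (σ : (Fin n → ℤ) → (Fin n → ℤ) → ℂ) (f g : (Fin n → ℤ) → ℂ) :
    (Fin n → ℤ) → ℂ :=
  fun x => ∑' y, f y * g (x - y) * σ y (x - y)

def delta {n : ℕ} (y : Fin n → ℤ) : (Fin n → ℤ) → ℂ := fun x => if x = y then 1 else 0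

def tpow {n : ℕ} (σ : (Fin n → ℤ) → (Fin n → ℤ) → ℂ) (f : (Fin n → ℤ) → ℂ) :
    ℕ → ((Fin n → ℤ) → ℂ)
  | 0 => delta 0
  | m + 1 => tconv σ f (tpow σ f m)

section lemmas
variable {n : ℕ} (θ : Fin n → Fin n → ℂ)

lemma coc_eq_one {l m : Fin n → ℤ} (h : ∀ p q : Fin n, p < q → l q * m p = 0) :
    coc θ l m = 1 := by
  apply Finset.prod_eq_one
  intro p hp
  simp only [Finset.mem_filter] at hp
  rw [h p.1 p.2 hp.2, zpow_zero]

lemma coc_eq_one_of_supp {j : Fin n} {l m : Fin n → ℤ}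
    (hl : ∀ q, q ≠ j → l q = 0) (hm : ∀ p, p ≠ j → m p = 0) :
    coc θ l m = 1 := by
  apply coc_eq_one
  intro p q hpq
  rcases eq_or_ne q j with rfl | hq
  · rw [hm p (ne_of_lt hpq), mul_zero]
  · rw [hl q hq, zero_mul]

lemma coc_norm_one (hUnit : ∀ j k, ‖θ j k‖ = 1) (l m : Fin n → ℤ) : ‖coc θ l m‖ = 1 := by
  rw [coc, norm_prod]
  apply Finset.prod_eq_one
  intro p _
  rw [norm_zpow, hUnit, one_zpow]

lemma coc_add_left (hθ : ∀ a b, θ a b ≠ 0) (l l' m : Fin n → ℤ) :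
    coc θ (l + l') m = coc θ l m * coc θ l' m := by
  rw [coc, coc, coc, ← Finset.prod_mul_distrib]
  apply Finset.prod_congr rfl
  intro p _
  rw [← zpow_add₀ (hθ _ _)]
  congr 1
  simp only [Pi.add_apply]
  ring

lemma coc_add_right (hθ : ∀ a b, θ a b ≠ 0) (l m m' : Fin n → ℤ) :
    coc θ l (m + m') = coc θ l m * coc θ l m' := by
  rw [coc, coc, coc, ← Finset.prod_mul_distrib]
  apply Finset.prod_congr rfl
  intro p _
  rw [← zpow_add₀ (hθ _ _)]
  congr 1
  simp only [Pi.add_apply]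
  ring

lemma coc_zero_left (m : Fin n → ℤ) : coc θ 0 m = 1 :=
  coc_eq_one θ (fun p q _ => by simp)

lemma coc_neg_left (hθ : ∀ a b, θ a b ≠ 0) (l m : Fin n → ℤ) :
    coc θ (-l) m = (coc θ l m)⁻¹ := by
  symm
  apply inv_eq_of_mul_eq_one_right
  rw [← coc_add_left θ hθ, add_neg_cancel, coc_zero_left]

lemma coc_nsmul_left (hθ : ∀ a b, θ a b ≠ 0) (k : ℕ) (l m : Fin n → ℤ) :
    coc θ (k • l) m = coc θ l m ^ k := by
  induction k with
  | zero => simp [coc_zero_left]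
  | succ k ih => rw [succ_nsmul, coc_add_left θ hθ, ih, pow_succ]

lemma coc_nsmul_right (hθ : ∀ a b, θ a b ≠ 0) (k : ℕ) (l m : Fin n → ℤ) :
    coc θ l (k • m) = coc θ l m ^ k := by
  induction k with
  | zero =>
    simp only [zero_smul, pow_zero]
    exact coc_eq_one θ (fun p q _ => by simp)
  | succ k ih => rw [succ_nsmul, coc_add_right θ hθ, ih, pow_succ]

lemma tconv_delta_left (σ : (Fin n → ℤ) → (Fin n → ℤ) → ℂ) (a : Fin n → ℤ)
    (g : (Fin n → ℤ) → ℂ) (x : Fin n → ℤ) :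
    tconv σ (delta a) g x = g (x - a) * σ a (x - a) := by
  rw [tconv]
  rw [tsum_eq_single a]
  · simp [delta]
  · intro y hy
    simp [delta, hy]

lemma tconv_delta_right (σ : (Fin n → ℤ) → (Fin n → ℤ) → ℂ) (a : Fin n → ℤ)
    (g : (Fin n → ℤ) → ℂ) (x : Fin n → ℤ) :
    tconv σ g (delta a) x = g (x - a) * σ (x - a) a := by
  rw [tconv]
  rw [tsum_eq_single (x - a)]
  · simp [delta, sub_sub_cancel]
  · intro y hy
    have : x - y ≠ a := fun h => hy (by rw [← h]; abel)
    simp [delta, this]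

lemma tpow_delta (σ : (Fin n → ℤ) → (Fin n → ℤ) → ℂ) (a : Fin n → ℤ)
    (ha : ∀ k : ℕ, σ a (k • a) = 1) (k : ℕ) :
    tpow σ (delta a) k = delta (k • a) := by
  induction k with
  | zero => simp [tpow]
  | succ k ih =>
    funext x
    rw [tpow, tconv_delta_left, ih]
    rcases eq_or_ne x ((k + 1) • a) with rfl | hx
    · have hxa : (k+1) • a - a = k • a := by rw [succ_nsmul]; abel
      rw [hxa, ha k, delta, delta]
      simp
    · have : x - a ≠ k • a := by
        intro h
        apply hx
        rw [succ_nsmul, ← h]; abel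
      rw [delta, delta, if_neg this, if_neg hx, zero_mul]

end lemmas

/-- with e_j the j-th standard basis vector,
δ_{e_j}* = conj(σ(e_j, −e_j)) δ_{−e_j}, and C_j = {y : σ(y,e_j) = σ(e_j,y)}, the averages
J_m(f) = (1/m) Σ_{k=1}^m (δ_{e_j}*)^{♮k} ♮ f ♮ (δ_{e_j})^{♮k} converge in ℓ¹_v-norm to
f · 1_{C_j}. -/
theorem statement14 {n : ℕ} (θ : Fin n → Fin n → ℂ)
    (hUnit : ∀ j k, ‖θ j k‖ = 1)
    (hHerm : ∀ j k, θ k j = starRingEnd ℂ (θ j k))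
    (hDiag : ∀ j, θ j j = 1)
    (v : (Fin n → ℤ) → ℝ)
    (hv1 : ∀ x, 1 ≤ v x)
    (hvsub : ∀ x y, v (x + y) ≤ v x * v y)
    (j : Fin n)
    (f : (Fin n → ℤ) → ℂ)
    (hf : Summable (fun x => ‖f x‖ * v x)) :
    Filter.Tendsto
      (fun m : ℕ => ∑' x : Fin n → ℤ,
        ‖((1 : ℂ) / (m : ℂ)) *
            (∑ k ∈ Finset.Icc 1 m,
              tconv (coc θ)
                (tconv (coc θ)
                  (tpow (coc θ)
                    (fun y =>
                      starRingEnd ℂ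
                          (coc θ (Pi.single j (1 : ℤ)) (-(Pi.single j (1 : ℤ)))) *
                        delta (-(Pi.single j (1 : ℤ))) y) k)
                  f)
                (tpow (coc θ) (delta (Pi.single j (1 : ℤ))) k) x)
          - (if coc θ x (Pi.single j (1 : ℤ)) = coc θ (Pi.single j (1 : ℤ)) x
              then f x else 0)‖ * v x)
      atTop (𝓝 0) := by
  classical
  set e : Fin n → ℤ := Pi.single j (1 : ℤ) with he
  have hθ : ∀ a b, θ a b ≠ 0 := by
    intro a b h
    have := hUnit a b
    rw [h, norm_zero] at this
    norm_num at this
  have he0 : ∀ q, q ≠ j → e q = 0 := fun q hq => Pi.single_eq_of_ne hq 1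
  -- the starred delta is just delta (-e)
  have hstar : (fun y => starRingEnd ℂ (coc θ e (-e)) * delta (-e) y) = delta (-e) := by
    have h1 : coc θ e (-e) = 1 :=
      coc_eq_one_of_supp θ he0 (fun p hp => by simp [he0 p hp])
    funext y
    rw [h1, map_one, one_mul]
  have hpe : ∀ k : ℕ, tpow (coc θ) (delta e) k = delta (k • e) :=
    tpow_delta _ _ (fun k => coc_eq_one_of_supp θ he0
      (fun p hp => by simp [he0 p hp]))
  have hpne : ∀ k : ℕ, tpow (coc θ) (delta (-e)) k = delta (k • (-e)) :=
    tpow_delta _ _ (fun k => coc_eq_one_of_supp θ (j := j) (fun q hq => by simp [he0 q hq])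
      (fun p hp => by simp [he0 p hp]))
  set μ : (Fin n → ℤ) → ℂ := fun x => coc θ x e * (coc θ e x)⁻¹ with hμdef
  have hkey : ∀ (k : ℕ) (x : Fin n → ℤ),
      tconv (coc θ) (tconv (coc θ) (delta (k • (-e))) f) (delta (k • e)) x
        = μ x ^ k * f x := by
    intro k x
    rw [tconv_delta_right, tconv_delta_left]
    have h1 : x - k • e - k • (-e) = x := by rw [smul_neg]; abel
    rw [h1]
    have h2 : coc θ (k • (-e)) x = ((coc θ e x)⁻¹) ^ k := by
      rw [coc_nsmul_left θ hθ, coc_neg_left θ hθ, inv_pow]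
    have h3 : coc θ (x - k • e) (k • e) = (coc θ x e) ^ k := by
      rw [sub_eq_add_neg, coc_add_left θ hθ, coc_nsmul_right θ hθ]
      have h4 : coc θ (-(k • e)) (k • e) = 1 := by
        apply coc_eq_one_of_supp θ (j := j)
        · intro q hq; simp [he0 q hq]
        · intro p hp; simp [he0 p hp]
      rw [h4, mul_one]
    rw [h2, h3, hμdef]
    rw [mul_pow]
    ring
  simp only [hstar, hpne, hpe, hkey]
  -- basic facts about μ
  have hne : ∀ x, coc θ e x ≠ 0 := by
    intro x h
    have := coc_norm_one θ hUnit e x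
    rw [h, norm_zero] at this
    norm_num at this
  have hnorm1 : ∀ x, ‖μ x‖ = 1 := by
    intro x
    rw [hμdef]
    simp [norm_mul, norm_inv, coc_norm_one θ hUnit]
  have hiff : ∀ x, (μ x = 1 ↔ coc θ x e = coc θ e x) := by
    intro x
    rw [hμdef]
    exact mul_inv_eq_one₀ (hne x)
  have hv0 : ∀ x, (0:ℝ) ≤ v x := fun x => le_trans zero_le_one (hv1 x)
  -- abbreviation for the summand
  set F : ℕ → (Fin n → ℤ) → ℝ := fun m x =>
    ‖(1 : ℂ) / (m : ℂ) * (∑ k ∈ Finset.Icc 1 m, μ x ^ k * f x)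
      - (if coc θ x e = coc θ e x then f x else 0)‖ * v x with hF
  have hF0 : ∀ m x, 0 ≤ F m x := fun m x => mul_nonneg (norm_nonneg _) (hv0 x)
  -- the uniform bound
  have hbd : ∀ (m : ℕ) (x : Fin n → ℤ), ‖F m x‖ ≤ 2 * (‖f x‖ * v x) := by
    intro m x
    rw [Real.norm_eq_abs, abs_of_nonneg (hF0 m x)]
    have hI : ‖(if coc θ x e = coc θ e x then f x else 0 : ℂ)‖ ≤ ‖f x‖ := by
      split <;> simp
    have hS : ‖(1 : ℂ) / (m : ℂ) * (∑ k ∈ Finset.Icc 1 m, μ x ^ k * f x)‖ ≤ ‖f x‖ := by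
      rw [norm_mul]
      have h1 : ‖(∑ k ∈ Finset.Icc 1 m, μ x ^ k * f x)‖ ≤ (m : ℝ) * ‖f x‖ := by
        calc ‖(∑ k ∈ Finset.Icc 1 m, μ x ^ k * f x)‖
            ≤ ∑ k ∈ Finset.Icc 1 m, ‖μ x ^ k * f x‖ := norm_sum_le _ _
          _ = ∑ k ∈ Finset.Icc 1 m, ‖f x‖ := by
              apply Finset.sum_congr rfl
              intro k _
              rw [norm_mul, norm_pow, hnorm1, one_pow, one_mul]
          _ = (m : ℝ) * ‖f x‖ := by
              rw [Finset.sum_const, Nat.card_Icc]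
              simp [nsmul_eq_mul]
      rcases Nat.eq_zero_or_pos m with rfl | hm
      · simp
      · have hm' : (m : ℝ) ≠ 0 := Nat.cast_ne_zero.mpr hm.ne'
        have : ‖(1 : ℂ) / (m : ℂ)‖ = 1 / (m : ℝ) := by
          rw [norm_div, norm_one, Complex.norm_natCast]
        rw [this]
        calc 1 / (m : ℝ) * ‖(∑ k ∈ Finset.Icc 1 m, μ x ^ k * f x)‖
            ≤ 1 / (m : ℝ) * ((m : ℝ) * ‖f x‖) := by
              apply mul_le_mul_of_nonneg_left h1
              positivity
          _ = ‖f x‖ := by field_simp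
    calc ‖(1 : ℂ) / (m : ℂ) * (∑ k ∈ Finset.Icc 1 m, μ x ^ k * f x)
          - (if coc θ x e = coc θ e x then f x else 0)‖ * v x
        ≤ (‖f x‖ + ‖f x‖) * v x := by
          apply mul_le_mul_of_nonneg_right _ (hv0 x)
          exact le_trans (norm_sub_le _ _) (add_le_add hS hI)
      _ = 2 * (‖f x‖ * v x) := by ring
  -- pointwise convergence
  have hpt : ∀ x, Tendsto (fun m => F m x) atTop (𝓝 0) := by
    intro x
    by_cases hx : coc θ x e = coc θ e x
    · have hμ1 : μ x = 1 := (hiff x).mpr hx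
      have hEq : (fun _ : ℕ => (0:ℝ)) =ᶠ[atTop] (fun m => F m x) := by
        filter_upwards [eventually_ge_atTop 1] with m hm
        have hsum : (∑ k ∈ Finset.Icc 1 m, μ x ^ k * f x) = (m : ℂ) * f x := by
          rw [Finset.sum_congr rfl (fun k _ => by rw [hμ1, one_pow, one_mul]),
            Finset.sum_const, Nat.card_Icc]
          simp [nsmul_eq_mul]
        have hm' : (m : ℂ) ≠ 0 := Nat.cast_ne_zero.mpr (by omega)
        symm
        simp only [hF]
        rw [hsum, if_pos hx,
          show (1 : ℂ) / (m : ℂ) * ((m : ℂ) * f x) - f x = 0 by field_simp; ring]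
        simp
      exact Tendsto.congr' hEq tendsto_const_nhds
    · have hμ1 : μ x ≠ 1 := fun h => hx ((hiff x).mp h)
      have hd : (0:ℝ) < ‖μ x - 1‖ := by
        rw [norm_pos_iff]
        exact sub_ne_zero.mpr hμ1
      set C : ℝ := 2 / ‖μ x - 1‖ * ‖f x‖ * v x with hC
      apply squeeze_zero (fun m => hF0 m x) _ (tendsto_const_div_atTop_nhds_zero_nat C)
      intro m
      have hgeo : ‖(∑ k ∈ Finset.Icc 1 m, μ x ^ k)‖ ≤ 2 / ‖μ x - 1‖ := by
        have h1 : (∑ k ∈ Finset.Icc 1 m, μ x ^ k)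
            = μ x * ((μ x ^ m - 1) / (μ x - 1)) := by
          rw [← Finset.Ico_add_one_right_eq_Icc, Finset.sum_Ico_eq_sum_range]
          try simp only [Nat.add_sub_cancel]
          rw [← geom_sum_eq hμ1, Finset.mul_sum]
          apply Finset.sum_congr rfl
          intro i _
          rw [pow_add, pow_one]
        rw [h1, norm_mul, hnorm1, one_mul, norm_div]
        gcongr
        calc ‖μ x ^ m - 1‖ ≤ ‖μ x ^ m‖ + ‖(1:ℂ)‖ := norm_sub_le _ _
          _ = 2 := by rw [norm_pow, hnorm1, one_pow, norm_one]; norm_num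
      simp only [hF]
      rw [if_neg hx, sub_zero, ← Finset.sum_mul, norm_mul, norm_mul]
      have hnm : ‖(1:ℂ)/(m:ℂ)‖ = 1/(m:ℝ) := by
        rw [norm_div, norm_one, Complex.norm_natCast]
      rw [hnm]
      calc 1/(m:ℝ) * (‖∑ k ∈ Finset.Icc 1 m, μ x ^ k‖ * ‖f x‖) * v x
          ≤ 1/(m:ℝ) * ((2/‖μ x - 1‖) * ‖f x‖) * v x := by
            gcongr <;> first | exact hv0 x | exact hgeo
        _ = C / m := by rw [hC]; ring
  -- apply dominated convergence
  have key := tendsto_tsum_of_dominated_convergence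
      (𝓕 := atTop) (f := F) (g := fun _ => (0:ℝ))
      (bound := fun x => 2 * (‖f x‖ * v x)) (hf.mul_left 2) hpt
      (Filter.Eventually.of_forall (fun m => hbd m))
  have h0 : (0:ℝ) = ∑' (_ : Fin n → ℤ), (0:ℝ) := tsum_zero.symm
  rw [h0]
  exact key
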